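/- Let x₁,…,x_m and x̃₁,…,x̃_m be vectors in ℝ^d such that for every i, every coordinate of x̃_i differs from the corresponding coordinate of x_i by at most δ ≥ 0 (i.e., ‖x̃_i − x_i‖_∞ ≤ δ), and ‖x_i‖₂ ≤ R for every i. Then ‖ Σ_{i=1}^m x̃_i x̃_iᵀ − Σ_{i=1}^m x_i x_iᵀ ‖_F ≤ m·(2√d·δ·R + d·δ²), where ‖·‖_F is the Frobenius norm. -/

import Mathlib

/-- Norm of a rank-one "outer product" vector factorizes. -/
lemma outer_norm_sq (d : ℕ) (u v : Fin d → ℝ) :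
    Real.sqrt (∑ p : Fin d × Fin d, (u p.1 * v p.2) ^ 2)
      = Real.sqrt (∑ a, u a ^ 2) * Real.sqrt (∑ b, v b ^ 2) := by
  rw [← Real.sqrt_mul (by positivity)]
  congr 1
  rw [Fintype.sum_prod_type, Finset.sum_mul]
  refine Finset.sum_congr rfl fun a _ => ?_
  rw [Finset.mul_sum]
  exact Finset.sum_congr rfl fun b _ => by ring

/-- Perturbation bound for the second-moment matrix under entrywise `δ`-rounding of the
samples: `‖ Σ x̃_i x̃_iᵀ − Σ x_i x_iᵀ ‖_F ≤ m (2 √d δ R + d δ²)`. -/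
theorem second_moment_rounding_bound (m d : ℕ) (δ R : ℝ) (hδ : 0 ≤ δ)
    (x xt : Fin m → EuclideanSpace ℝ (Fin d))
    (hclose : ∀ i a, |xt i a - x i a| ≤ δ)
    (hnorm : ∀ i, ‖x i‖ ≤ R) :
    Real.sqrt (∑ a : Fin d, ∑ b : Fin d,
        ((∑ i, xt i a * xt i b) - (∑ i, x i a * x i b)) ^ 2)
      ≤ m * (2 * Real.sqrt d * δ * R + d * δ ^ 2) := by
  classical
  set e : Fin m → Fin d → ℝ := fun i a => xt i a - x i a with he
  have hesq : ∀ i, Real.sqrt (∑ a : Fin d, e i a ^ 2) ≤ Real.sqrt d * δ := by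
    intro i
    have h1 : (∑ a : Fin d, e i a ^ 2) ≤ d * δ ^ 2 := by
      calc ∑ a : Fin d, e i a ^ 2 ≤ ∑ _a : Fin d, δ ^ 2 := by
            refine Finset.sum_le_sum fun a _ => ?_
            have h := hclose i a
            have h2 := abs_nonneg (xt i a - x i a)
            have h3 := sq_abs (xt i a - x i a)
            simp only [he]
            nlinarith
        _ = d * δ ^ 2 := by simp [mul_comm]
    calc Real.sqrt (∑ a : Fin d, e i a ^ 2) ≤ Real.sqrt (d * δ ^ 2) :=
          Real.sqrt_le_sqrt h1
      _ = Real.sqrt d * δ := by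
          rw [Real.sqrt_mul (by positivity), Real.sqrt_sq hδ]
  have hxsq : ∀ i, Real.sqrt (∑ a : Fin d, x i a ^ 2) ≤ R := by
    intro i
    have h := hnorm i
    rw [EuclideanSpace.norm_eq] at h
    simpa [Real.norm_eq_abs, sq_abs] using h
  set F : Fin m → EuclideanSpace ℝ (Fin d × Fin d) :=
    fun i => WithLp.toLp 2 (fun p : Fin d × Fin d => xt i p.1 * xt i p.2 - x i p.1 * x i p.2) with hF
  have hLHS : Real.sqrt (∑ a : Fin d, ∑ b : Fin d,
        ((∑ i, xt i a * xt i b) - (∑ i, x i a * x i b)) ^ 2) = ‖∑ i, F i‖ := by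
    rw [EuclideanSpace.norm_eq]
    congr 1
    rw [Fintype.sum_prod_type]
    refine Finset.sum_congr rfl fun a _ => Finset.sum_congr rfl fun b _ => ?_
    have : (∑ i, F i) (a, b) = ∑ i, F i (a, b) := by
      rw [WithLp.ofLp_sum]; exact Finset.sum_apply _ _ _
    rw [Real.norm_eq_abs, sq_abs, this]
    simp only [hF]
    rw [Finset.sum_sub_distrib]
  have key : ∀ i : Fin m, ‖F i‖ ≤ 2 * Real.sqrt d * δ * R + d * δ ^ 2 := by
    intro i
    set G : EuclideanSpace ℝ (Fin d × Fin d) := WithLp.toLp 2 (fun p : Fin d × Fin d => e i p.1 * x i p.2) with hG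
    set H : EuclideanSpace ℝ (Fin d × Fin d) := WithLp.toLp 2 (fun p : Fin d × Fin d => x i p.1 * e i p.2) with hH
    set K : EuclideanSpace ℝ (Fin d × Fin d) := WithLp.toLp 2 (fun p : Fin d × Fin d => e i p.1 * e i p.2) with hK
    have hdec : F i = G + H + K := by
      ext p
      simp only [hF, hG, hH, hK, he, PiLp.add_apply]
      ring
    have hGn : ‖G‖ ≤ Real.sqrt d * δ * R := by
      rw [EuclideanSpace.norm_eq]
      simp only [Real.norm_eq_abs, sq_abs, hG]
      rw [outer_norm_sq]
      exact mul_le_mul (hesq i) (hxsq i) (Real.sqrt_nonneg _) (by positivity)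
    have hHn : ‖H‖ ≤ R * (Real.sqrt d * δ) := by
      rw [EuclideanSpace.norm_eq]
      simp only [Real.norm_eq_abs, sq_abs, hH]
      rw [outer_norm_sq]
      exact mul_le_mul (hxsq i) (hesq i) (Real.sqrt_nonneg _) ((Real.sqrt_nonneg _).trans (hxsq i))
    have hKn : ‖K‖ ≤ d * δ ^ 2 := by
      rw [EuclideanSpace.norm_eq]
      simp only [Real.norm_eq_abs, sq_abs, hK]
      rw [outer_norm_sq]
      have : Real.sqrt d * δ * (Real.sqrt d * δ) = d * δ ^ 2 := by
        have := Real.mul_self_sqrt (Nat.cast_nonneg d : (0:ℝ) ≤ d)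
        nlinarith
      calc Real.sqrt (∑ a, e i a ^ 2) * Real.sqrt (∑ b, e i b ^ 2)
          ≤ (Real.sqrt d * δ) * (Real.sqrt d * δ) :=
            mul_le_mul (hesq i) (hesq i) (Real.sqrt_nonneg _) (by positivity)
        _ = d * δ ^ 2 := this
    calc ‖F i‖ ≤ ‖G‖ + ‖H‖ + ‖K‖ := hdec ▸ norm_add₃_le
      _ ≤ Real.sqrt d * δ * R + R * (Real.sqrt d * δ) + d * δ ^ 2 := by
          gcongr
      _ = 2 * Real.sqrt d * δ * R + d * δ ^ 2 := by ring
  rw [hLHS]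
  calc ‖∑ i, F i‖ ≤ ∑ i, ‖F i‖ := norm_sum_le _ _
    _ ≤ ∑ _i : Fin m, (2 * Real.sqrt d * δ * R + d * δ ^ 2) :=
        Finset.sum_le_sum fun i _ => key i
    _ = m * (2 * Real.sqrt d * δ * R + d * δ ^ 2) := by
        rw [Finset.sum_const, Finset.card_univ, Fintype.card_fin, nsmul_eq_mul]
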